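/- For every partition μ of n ≥ 1, B^{(n)}_μ(t) = (1−t)^{l(μ)}, where (n) is the one-row partition of n. -/

import Mathlib

open scoped BigOperators

namespace Green

noncomputable section

/-- The base field `F = ℚ(t)`, the field of rational functions in `t`. -/
abbrev FF : Type := RatFunc ℚ

/-- The indeterminate `t ∈ ℚ(t)`. -/
def tF : FF := RatFunc.X

/-- The ring of symmetric functions over `F`, identified with the polynomial ring
`F[p₁, p₂, …]` on the power sums, variables indexed by positive integers. -/
abbrev SymF : Type := MvPolynomial ℕ+ FF

/-- The power sum `p_n` for `n ≥ 1` (junk value `1` if `n = 0`). -/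
def pS (n : ℕ) : SymF := if h : 0 < n then MvPolynomial.X (⟨n, h⟩ : ℕ+) else 1

/-- `p_λ = p_{λ₁} ⋯ p_{λ_l}` for a partition given as a multiset of parts. -/
def pMs (m : Multiset ℕ) : SymF := (m.map pS).prod

/-- `z_λ = ∏_i i^{m_i} · m_i!` where `m_i` is the multiplicity of `i` in `λ`. -/
def zMs (m : Multiset ℕ) : ℕ :=
  m.toFinset.prod fun i => i ^ m.count i * (m.count i).factorial

/-- `z_λ(t) = z_λ / ∏_j (1 - t^{λ_j})`. -/
def ztMs (m : Multiset ℕ) : FF := (zMs m : FF) / (m.map fun i => 1 - tF ^ i).prod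

/-- `q_k`: equal to `0` for `k < 0`, `1` for `k = 0`, and `∑_{ν ⊢ k} z_ν(t)⁻¹ p_ν` for `k ≥ 1`. -/
def qq (k : ℤ) : SymF :=
  if k < 0 then 0
  else ∑ ν : Nat.Partition k.toNat, (ztMs ν.parts)⁻¹ • pMs ν.parts

/-- Coefficients of `(1 - R)(∑_{k≥0} t^k R^k) = 1 + ∑_{k≥1} (t^k - t^{k-1}) R^k`. -/
def cRO : ℕ → FF
  | 0 => 1
  | k + 1 => tF ^ (k + 1) - tF ^ k

/-- Index pairs `i < j` for the raising operators `R_{ij}`. -/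
abbrev PairsLT (l : ℕ) : Type := {pr : Fin l × Fin l // pr.1 < pr.2}

/-- The result of applying `∏_{i<j} R_{ij}^{k_{ij}}` to the integer tuple `α`,
where `R_{ij}` translates the index by `e_i - e_j`. -/
def raised {l : ℕ} (α : Fin l → ℤ) (k : PairsLT l → ℕ) : Fin l → ℤ := fun r =>
  α r + ∑ pr : PairsLT l, (k pr : ℤ) *
    ((if pr.val.1 = r then 1 else 0) - (if pr.val.2 = r then 1 else 0))

/-- `q_β = q_{β₁} ⋯ q_{β_l}` for an integer tuple `β`. -/
def qTup {l : ℕ} (β : Fin l → ℤ) : SymF := ∏ i, qq (β i)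

/-- The Hall–Littlewood function
`Q_α(t) = ∏_{1≤i<j≤l} (1 - R_{ij})(∑_{k≥0} t^k R_{ij}^k) q_α`,
the (finitely supported) expansion of the product of raising-operator series. -/
def QTup {l : ℕ} (α : Fin l → ℤ) : SymF :=
  finsum fun k : PairsLT l → ℕ => (∏ pr, cRO (k pr)) • qTup (raised α k)

/-- `Q_α(t)` for an integer list `α`. -/
def QL (α : List ℤ) : SymF := QTup fun i : Fin α.length => α.get i

/-- The weakly decreasing sort of a multiset of naturals. -/
def sortDesc (m : Multiset ℕ) : List ℕ := (m.sort (· ≤ ·)).reverse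

/-- `Q_λ(t)` for a partition given as a multiset of parts. -/
def QMs (m : Multiset ℕ) : SymF := QL ((sortDesc m).map fun i => (i : ℤ))

/-- The Hall–Littlewood bilinear form on `Λ_F`, determined by
`⟨p_λ, p_μ⟩ = δ_{λμ} z_λ(t)` on the power-sum (monomial) basis. -/
def formHL (f g : SymF) : FF :=
  ∑ d ∈ f.support, MvPolynomial.coeff d f * MvPolynomial.coeff d g *
    ztMs (d.toMultiset.map fun i => (i : ℕ))

/-- `q_μ = q_{μ₁} ⋯ q_{μ_l}` for a partition given as a multiset. -/
def qProd (m : Multiset ℕ) : SymF := (m.map fun i => qq (i : ℤ)).prod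

/-- The bitrace coefficient `B^ν_μ(t) = ⟨Q_ν(t), q_μ⟩`. -/
def Btr (ν μ : Multiset ℕ) : FF := formHL (QMs ν) (qProd μ)


/-! ### Auxiliary lemmas -/

lemma tF_pow_ne_one {k : ℕ} (hk : 0 < k) : tF ^ k ≠ 1 := by
  intro h
  have h2 : (algebraMap (Polynomial ℚ) (RatFunc ℚ)) (Polynomial.X ^ k) =
      (algebraMap (Polynomial ℚ) (RatFunc ℚ)) 1 := by
    simpa [map_pow, tF] using h
  have h3 := RatFunc.algebraMap_injective ℚ h2
  have h4 := congrArg Polynomial.natDegree h3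
  simp [Polynomial.natDegree_X_pow] at h4
  omega

instance : CharZero FF where
  cast_injective a b h := by
    have h2 : (algebraMap (Polynomial ℚ) FF) (a : Polynomial ℚ)
        = (algebraMap (Polynomial ℚ) FF) (b : Polynomial ℚ) := by
      rw [map_natCast, map_natCast]; exact h
    exact Nat.cast_injective (RatFunc.algebraMap_injective ℚ h2)

lemma oneSubT_ne {k : ℕ} (hk : 0 < k) : (1 : FF) - tF ^ k ≠ 0 :=
  sub_ne_zero_of_ne (Ne.symm (tF_pow_ne_one hk))

lemma zMs_pos (m : Multiset ℕ) (hm : ∀ x ∈ m, 0 < x) : 0 < zMs m := by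
  apply Finset.prod_pos
  intro i hi
  have h1 : 0 < i := hm i (Multiset.mem_toFinset.mp hi)
  positivity

lemma prodT_ne (m : Multiset ℕ) (hm : ∀ x ∈ m, 0 < x) :
    ((m.map fun i => 1 - tF ^ i).prod : FF) ≠ 0 := by
  apply Multiset.prod_ne_zero
  intro h0
  obtain ⟨i, hi, hi0⟩ := Multiset.mem_map.mp h0
  exact oneSubT_ne (hm i hi) hi0

lemma ztMs_ne (m : Multiset ℕ) (hm : ∀ x ∈ m, 0 < x) : ztMs m ≠ 0 := by
  unfold ztMs
  apply div_ne_zero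
  · exact Nat.cast_ne_zero.mpr (zMs_pos m hm).ne'
  · exact prodT_ne m hm

lemma zMs_cons (k : ℕ) (s : Multiset ℕ) :
    zMs (k ::ₘ s) = (k * (s.count k + 1)) * zMs s := by
  classical
  unfold zMs
  by_cases h : k ∈ s.toFinset
  · rw [Multiset.toFinset_cons, Finset.insert_eq_self.mpr h]
    rw [← Finset.mul_prod_erase _ _ h, ← Finset.mul_prod_erase _ _ h]
    have hrest : ∀ i ∈ s.toFinset.erase k,
        i ^ Multiset.count i (k ::ₘ s) * (Multiset.count i (k ::ₘ s)).factorial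
        = i ^ Multiset.count i s * (Multiset.count i s).factorial := by
      intro i hi
      rw [Multiset.count_cons_of_ne (Finset.ne_of_mem_erase hi)]
    rw [Finset.prod_congr rfl hrest, Multiset.count_cons_self, pow_succ, Nat.factorial_succ]
    ring
  · rw [Multiset.toFinset_cons, Finset.prod_insert h]
    have hc0 : Multiset.count k s = 0 :=
      Multiset.count_eq_zero_of_notMem (fun hmem => h (Multiset.mem_toFinset.mpr hmem))
    have hrest : ∀ i ∈ s.toFinset,
        i ^ Multiset.count i (k ::ₘ s) * (Multiset.count i (k ::ₘ s)).factorial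
        = i ^ Multiset.count i s * (Multiset.count i s).factorial := by
      intro i hi
      have hik : i ≠ k := by rintro rfl; exact h hi
      rw [Multiset.count_cons_of_ne hik]
    rw [Finset.prod_congr rfl hrest, Multiset.count_cons_self, hc0]
    simp [Nat.factorial_one]

lemma ztMs_cons (k : ℕ) (s : Multiset ℕ) :
    ztMs (k ::ₘ s) = ((k * (s.count k + 1) : ℕ) : FF) / (1 - tF ^ k) * ztMs s := by
  unfold ztMs
  rw [zMs_cons, Multiset.map_cons, Multiset.prod_cons, Nat.cast_mul, div_mul_div_comm]

/-- The sum `S(m) = ∑_{λ ⊢ m} z_λ(t)⁻¹`. -/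
def SS (m : ℕ) : FF := ∑ ν : Nat.Partition m, (ztMs ν.parts)⁻¹

lemma parts_zero (ν : Nat.Partition 0) : ν.parts = 0 := by
  rw [Multiset.eq_zero_iff_forall_notMem]
  intro x hx
  have h1 := ν.parts_pos hx
  have h2 := Multiset.single_le_sum (fun y _ => Nat.zero_le y) x hx
  rw [ν.parts_sum] at h2
  omega

lemma ztMs_zero : ztMs 0 = 1 := by simp [ztMs, zMs]

instance : Unique (Nat.Partition 0) where
  default := ⟨0, by simp, rfl⟩
  uniq := fun ν => Nat.Partition.ext (parts_zero ν)

lemma SS_zero : SS 0 = 1 := by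
  rw [SS, Fintype.sum_unique]
  show (ztMs (0 : Multiset ℕ))⁻¹ = 1
  rw [ztMs_zero, inv_one]

/-- Removing a part `k` from a partition of `m`. -/
def erasePart (k m : ℕ) (ν : Nat.Partition m) (h : k ∈ ν.parts) : Nat.Partition (m - k) where
  parts := ν.parts.erase k
  parts_pos := fun hi => ν.parts_pos (Multiset.mem_of_mem_erase hi)
  parts_sum := by
    have h1 : k + (ν.parts.erase k).sum = m := by
      rw [← Multiset.sum_cons, Multiset.cons_erase h, ν.parts_sum]
    omega

/-- Adding a part `k` to a partition of `m - k`. -/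
def consPart (k m : ℕ) (hk : 0 < k) (hkm : k ≤ m) (s : Nat.Partition (m - k)) :
    Nat.Partition m where
  parts := k ::ₘ s.parts
  parts_pos := fun hi => by
    rcases Multiset.mem_cons.mp hi with h | h
    · omega
    · exact s.parts_pos h
  parts_sum := by rw [Multiset.sum_cons, s.parts_sum]; omega

lemma sum_marked (k m : ℕ) (hk : 1 ≤ k) (hkm : k ≤ m) :
    ∑ ν : Nat.Partition m, (ztMs ν.parts)⁻¹ * ((k * ν.parts.count k : ℕ) : FF) =
      (1 - tF ^ k) * SS (m - k) := by
  classical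
  rw [SS, Finset.mul_sum]
  rw [← Finset.sum_filter_add_sum_filter_not Finset.univ
    (fun ν : Nat.Partition m => k ∈ ν.parts)]
  have h2 : ∑ ν ∈ Finset.univ.filter (fun ν : Nat.Partition m => ¬ k ∈ ν.parts),
      (ztMs ν.parts)⁻¹ * ((k * ν.parts.count k : ℕ) : FF) = 0 := by
    apply Finset.sum_eq_zero
    intro ν hν
    simp only [Finset.mem_filter] at hν
    rw [Multiset.count_eq_zero_of_notMem hν.2]
    simp
  rw [h2, add_zero]
  refine Finset.sum_bij'
    (fun ν hν => erasePart k m ν (by simpa using (Finset.mem_filter.mp hν).2))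
    (fun s _ => consPart k m hk hkm s) ?_ ?_ ?_ ?_ ?_
  · intro a ha; exact Finset.mem_univ _
  · intro s hs
    simp only [Finset.mem_filter, Finset.mem_univ, true_and]
    exact Multiset.mem_cons_self _ _
  · intro ν hν
    apply Nat.Partition.ext
    show k ::ₘ ν.parts.erase k = ν.parts
    exact Multiset.cons_erase (by simpa using (Finset.mem_filter.mp hν).2)
  · intro s hs
    apply Nat.Partition.ext
    show (k ::ₘ s.parts).erase k = s.parts
    exact Multiset.erase_cons_head _ _
  · intro ν hν
    have hmem : k ∈ ν.parts := by simpa using (Finset.mem_filter.mp hν).2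
    set e : Multiset ℕ := ν.parts.erase k with he
    have hparts : ν.parts = k ::ₘ e := (Multiset.cons_erase hmem).symm
    show (ztMs ν.parts)⁻¹ * ((k * ν.parts.count k : ℕ) : FF) = (1 - tF ^ k) * (ztMs e)⁻¹
    rw [hparts, ztMs_cons, Multiset.count_cons_self]
    have hepos : ∀ x ∈ e, 0 < x := fun x hx =>
      ν.parts_pos (Multiset.mem_of_mem_erase hx)
    have hz : ztMs e ≠ 0 := ztMs_ne e hepos
    have ha : ((k * (e.count k + 1) : ℕ) : FF) ≠ 0 := by
      have : k * (e.count k + 1) ≠ 0 := by positivity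
      exact Nat.cast_ne_zero.mpr this
    have hb : (1 : FF) - tF ^ k ≠ 0 := oneSubT_ne hk
    rw [mul_inv, inv_div, mul_right_comm, div_mul_cancel₀ _ ha]

lemma count_sum (m : ℕ) (ν : Nat.Partition m) :
    ∑ k ∈ Finset.Icc 1 m, k * ν.parts.count k = m := by
  classical
  have hsub : ν.parts.toFinset ⊆ Finset.Icc 1 m := by
    intro i hi
    rw [Multiset.mem_toFinset] at hi
    rw [Finset.mem_Icc]
    refine ⟨ν.parts_pos hi, ?_⟩
    have := Multiset.single_le_sum (fun y _ => Nat.zero_le y) i hi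
    rw [ν.parts_sum] at this
    exact this
  rw [← Finset.sum_subset hsub (fun x _ hx => by
    rw [Multiset.count_eq_zero_of_notMem (fun hmem => hx (Multiset.mem_toFinset.mpr hmem)),
      mul_zero])]
  have h1 := Finset.sum_multiset_map_count ν.parts (id : ℕ → ℕ)
  simp only [Multiset.map_id, Multiset.map_id', id_eq, smul_eq_mul, ν.parts_sum] at h1
  conv_rhs => rw [h1]
  exact Finset.sum_congr rfl fun i _ => mul_comm _ _

lemma SS_recur (m : ℕ) (hm : 1 ≤ m) :
    (m : FF) * SS m = ∑ k ∈ Finset.Icc 1 m, (1 - tF ^ k) * SS (m - k) := by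
  classical
  have h1 : ∀ k ∈ Finset.Icc 1 m, (1 - tF ^ k) * SS (m - k)
      = ∑ ν : Nat.Partition m, (ztMs ν.parts)⁻¹ * ((k * ν.parts.count k : ℕ) : FF) := by
    intro k hk
    simp only [Finset.mem_Icc] at hk
    exact (sum_marked k m hk.1 hk.2).symm
  rw [Finset.sum_congr rfl h1, Finset.sum_comm]
  rw [SS, Finset.mul_sum]
  apply Finset.sum_congr rfl
  intro ν _
  rw [← Finset.mul_sum, ← Nat.cast_sum, count_sum, mul_comm]

lemma SS_eq (m : ℕ) (hm : 1 ≤ m) : SS m = 1 - tF := by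
  induction m using Nat.strong_induction_on with
  | _ m ih =>
    obtain ⟨M, rfl⟩ : ∃ M, m = M + 1 := ⟨m - 1, by omega⟩
    have hrec := SS_recur (M + 1) (by omega)
    rw [Finset.sum_Icc_succ_top (by omega)] at hrec
    have hmid : ∀ k ∈ Finset.Icc 1 M, (1 - tF ^ k) * SS (M + 1 - k)
        = (1 - tF ^ k) * (1 - tF) := by
      intro k hk
      simp only [Finset.mem_Icc] at hk
      rw [ih (M + 1 - k) (by omega) (by omega)]
    rw [Finset.sum_congr rfl hmid, Nat.sub_self, SS_zero, mul_one] at hrec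
    have hgeom : (1 : FF) - tF ^ (M + 1)
        = (1 - tF) * ∑ i ∈ Finset.range (M + 1), tF ^ i := by
      have hg := geom_sum_mul tF (M + 1)
      linear_combination hg
    have hIcc : ∑ k ∈ Finset.Icc 1 M, tF ^ k = ∑ i ∈ Finset.range M, tF ^ (i + 1) := by
      rw [← Finset.Ico_add_one_right_eq_Icc, Finset.sum_Ico_eq_sum_range]
      simp [add_comm]
    have hcard : (Finset.Icc 1 M).card = M := by simp
    have hsum : ∑ k ∈ Finset.Icc 1 M, (1 - tF ^ k) * (1 - tF)
        = ((M : FF) - ∑ k ∈ Finset.Icc 1 M, tF ^ k) * (1 - tF) := by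
      rw [← Finset.sum_mul, Finset.sum_sub_distrib, Finset.sum_const, hcard]
      simp [nsmul_eq_mul]
    have hA : ∑ i ∈ Finset.range (M + 1), tF ^ i
        = ∑ i ∈ Finset.range M, tF ^ (i + 1) + 1 := by
      rw [Finset.sum_range_succ']
      simp
    have key : ((M + 1 : ℕ) : FF) * SS (M + 1) = ((M + 1 : ℕ) : FF) * (1 - tF) := by
      rw [hrec, hsum, hgeom, hA, hIcc]
      push_cast
      ring
    have hM : ((M + 1 : ℕ) : FF) ≠ 0 := Nat.cast_ne_zero.mpr (by omega)
    exact mul_left_cancel₀ hM key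


/-! ### Monomial bookkeeping -/

/-- Convert a multiset of naturals to a multiset of positive naturals, dropping zeros. -/
def pnat (m : Multiset ℕ) : Multiset ℕ+ :=
  m.filterMap fun x => if h : 0 < x then some ⟨x, h⟩ else none

lemma pnat_zero : pnat 0 = 0 := rfl

lemma pnat_cons (k : ℕ) (hk : 0 < k) (m : Multiset ℕ) :
    pnat (k ::ₘ m) = @Multiset.cons ℕ+ ⟨k, hk⟩ (pnat m) :=
  Multiset.filterMap_cons_some _ _ _ (dif_pos hk)

lemma pnat_map_val (s : Multiset ℕ+) : pnat (s.map (fun i : ℕ+ => (i : ℕ))) = s := by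
  induction s using Multiset.induction_on with
  | empty => rfl
  | cons a s ih =>
    have ha : (⟨(a : ℕ), a.pos⟩ : ℕ+) = a := rfl
    rw [Multiset.map_cons, pnat_cons _ a.pos, ha, ih]

lemma map_val_pnat (m : Multiset ℕ) (hm : ∀ x ∈ m, 0 < x) :
    (pnat m).map (fun i : ℕ+ => (i : ℕ)) = m := by
  induction m using Multiset.induction_on with
  | empty => rfl
  | cons a s ih =>
    have ha : 0 < a := hm a (Multiset.mem_cons_self a s)
    rw [pnat_cons a ha]
    erw [Multiset.map_cons,
      ih (fun x hx => hm x (Multiset.mem_cons_of_mem hx))]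
    rfl

lemma toFinsupp_cons (a : ℕ+) (s : Multiset ℕ+) :
    Multiset.toFinsupp (a ::ₘ s) = Finsupp.single a 1 + Multiset.toFinsupp s := by
  rw [← Multiset.singleton_add, map_add, Multiset.toFinsupp_singleton]

/-- The exponent vector of the monomial `p_ν`. -/
def DD {n : ℕ} (ν : Nat.Partition n) : ℕ+ →₀ ℕ := Multiset.toFinsupp (pnat ν.parts)

lemma DD_inj {n : ℕ} : Function.Injective (DD (n := n)) := by
  intro ν σ h
  apply Nat.Partition.ext
  have h2 : pnat ν.parts = pnat σ.parts := Multiset.toFinsupp.injective h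
  have h3 := congrArg (Multiset.map (fun i : ℕ+ => (i : ℕ))) h2
  rwa [map_val_pnat _ (fun x hx => ν.parts_pos hx),
    map_val_pnat _ (fun x hx => σ.parts_pos hx)] at h3

lemma DD_toMultiset {n : ℕ} (ν : Nat.Partition n) :
    ((DD ν).toMultiset.map fun i : ℕ+ => (i : ℕ)) = ν.parts := by
  rw [DD, Multiset.toFinsupp_toMultiset]
  exact map_val_pnat _ (fun x hx => ν.parts_pos hx)

lemma pMs_eq_monomial (m : Multiset ℕ) (hm : ∀ x ∈ m, 0 < x) :
    pMs m = MvPolynomial.monomial (Multiset.toFinsupp (pnat m)) 1 := by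
  induction m using Multiset.induction_on with
  | empty =>
    show (1 : SymF) = _
    rw [pnat_zero]
    simp
  | cons a s ih =>
    have ha : 0 < a := hm a (Multiset.mem_cons_self a s)
    have hstep : pMs (a ::ₘ s) = pS a * pMs s := by
      rw [pMs, Multiset.map_cons, Multiset.prod_cons]; rfl
    rw [hstep, ih (fun x hx => hm x (Multiset.mem_cons_of_mem hx)), pS, dif_pos ha,
      pnat_cons a ha]
    erw [toFinsupp_cons, MvPolynomial.monomial_single_add, pow_one]

lemma qq_eq0 (n : ℕ) :
    qq (n : ℤ) = ∑ ν : Nat.Partition n, (ztMs ν.parts)⁻¹ • pMs ν.parts := by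
  rw [qq, if_neg (by omega)]
  have h : ((n : ℤ)).toNat = n := Int.toNat_natCast n
  congr 1

lemma qq_eq (n : ℕ) :
    qq (n : ℤ) = ∑ ν : Nat.Partition n,
      (ztMs ν.parts)⁻¹ • MvPolynomial.monomial (DD ν) 1 := by
  rw [qq_eq0]
  exact Finset.sum_congr rfl fun ν _ => by
    rw [pMs_eq_monomial _ (fun x hx => ν.parts_pos hx)]; rfl

lemma coeff_qq (n : ℕ) (ν : Nat.Partition n) :
    MvPolynomial.coeff (DD ν) (qq (n : ℤ)) = (ztMs ν.parts)⁻¹ := by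
  classical
  rw [qq_eq, MvPolynomial.coeff_sum]
  rw [Finset.sum_eq_single ν]
  · rw [MvPolynomial.coeff_smul, MvPolynomial.coeff_monomial, if_pos rfl]
    simp
  · intro σ _ hne
    rw [MvPolynomial.coeff_smul, MvPolynomial.coeff_monomial,
      if_neg (fun h => hne (DD_inj h))]
    simp
  · intro h
    exact absurd (Finset.mem_univ ν) h

lemma support_qq (n : ℕ) :
    (qq (n : ℤ)).support ⊆ Finset.univ.image (DD (n := n)) := by
  classical
  intro d hd
  rw [MvPolynomial.mem_support_iff] at hd
  rw [qq_eq, MvPolynomial.coeff_sum] at hd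
  obtain ⟨ν, -, hne⟩ := Finset.exists_ne_zero_of_sum_ne_zero hd
  rw [MvPolynomial.coeff_smul, MvPolynomial.coeff_monomial] at hne
  have hDD : DD ν = d := by
    by_contra hc
    rw [if_neg hc] at hne
    simp at hne
  exact Finset.mem_image.mpr ⟨ν, Finset.mem_univ _, hDD⟩

/-! ### Weighted homogeneity -/

/-- The weighted degree of an exponent vector. -/
def Wt (d : ℕ+ →₀ ℕ) : ℕ := ((d.toMultiset.map fun i : ℕ+ => (i : ℕ)).sum)

lemma Wt_add (d e : ℕ+ →₀ ℕ) : Wt (d + e) = Wt d + Wt e := by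
  unfold Wt
  rw [Finsupp.toMultiset_add, Multiset.map_add, Multiset.sum_add]

/-- All monomials of `p` have weighted degree `n`. -/
def Homo (p : SymF) (n : ℕ) : Prop := ∀ d ∈ p.support, Wt d = n

lemma Homo.mul {p q : SymF} {m n : ℕ} (hp : Homo p m) (hq : Homo q n) :
    Homo (p * q) (m + n) := by
  classical
  intro d hd
  have h1 := MvPolynomial.support_mul p q hd
  rw [Finset.mem_add] at h1
  obtain ⟨a, ha, b, hb, rfl⟩ := h1
  rw [Wt_add, hp a ha, hq b hb]

lemma Homo.one : Homo 1 0 := by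
  intro d hd
  classical
  rw [show (1 : SymF) = MvPolynomial.monomial 0 1 by simp,
    MvPolynomial.support_monomial, if_neg one_ne_zero] at hd
  rw [Finset.mem_singleton] at hd
  subst hd
  simp [Wt]

lemma homo_qq (n : ℕ) : Homo (qq (n : ℤ)) n := by
  classical
  intro d hd
  rw [MvPolynomial.mem_support_iff, qq_eq, MvPolynomial.coeff_sum] at hd
  obtain ⟨ν, -, hne⟩ := Finset.exists_ne_zero_of_sum_ne_zero hd
  rw [MvPolynomial.coeff_smul, MvPolynomial.coeff_monomial] at hne
  have hDD : DD ν = d := by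
    by_contra hc
    rw [if_neg hc] at hne
    simp at hne
  subst hDD
  show ((DD ν).toMultiset.map fun i : ℕ+ => (i : ℕ)).sum = n
  rw [DD_toMultiset, ν.parts_sum]

lemma coeMs (m : Multiset ℕ+) :
    (Multiset.map (fun i : ℕ => i) (do let a ← m; pure ((a : ℕ))))
      = m.map (fun i : ℕ+ => (i : ℕ)) := by
  simp [Multiset.bind_singleton]

lemma qProd_eq (m : Multiset ℕ) :
    qProd m = (m.map (fun i : ℕ => qq (i : ℤ))).prod := by
  rw [qProd]
  have h : (do let a ← m; pure ((a : ℤ))) = m.map (fun a : ℕ => (a : ℤ)) := by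
    simp [Multiset.bind_singleton]
  rw [h, Multiset.map_map]
  rfl

lemma qProd_zero : qProd 0 = 1 := by
  rw [qProd_eq, Multiset.map_zero, Multiset.prod_zero]

lemma qProd_cons (a : ℕ) (s : Multiset ℕ) :
    qProd (a ::ₘ s) = qq (a : ℤ) * qProd s := by
  rw [qProd_eq, Multiset.map_cons, Multiset.prod_cons, ← qProd_eq]

lemma homo_qProd (m : Multiset ℕ) : Homo (qProd m) m.sum := by
  induction m using Multiset.induction_on with
  | empty =>
    rw [qProd_zero]
    have h0 : (0 : Multiset ℕ).sum = 0 := rfl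
    rw [h0]
    exact Homo.one
  | cons a s ih =>
    rw [qProd_cons, Multiset.sum_cons]
    exact (homo_qq a).mul ih

/-! ### Reduction of the form to an evaluation -/

lemma formHL_qq (n : ℕ) (g : SymF)
    (hg : g.support ⊆ Finset.univ.image (DD (n := n))) :
    formHL (qq (n : ℤ)) g = MvPolynomial.eval (fun _ : ℕ+ => (1 : FF)) g := by
  classical
  rw [formHL]
  simp only [coeMs]
  rw [Finset.sum_subset (support_qq n)
    (fun d _ hd => by
      rw [MvPolynomial.notMem_support_iff.mp hd, zero_mul, zero_mul])]
  rw [Finset.sum_image (fun ν _ σ _ h => DD_inj h)]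
  have hterm : ∀ ν : Nat.Partition n,
      MvPolynomial.coeff (DD ν) (qq (n : ℤ)) * MvPolynomial.coeff (DD ν) g *
        ztMs ((DD ν).toMultiset.map fun i : ℕ+ => (i : ℕ))
      = MvPolynomial.coeff (DD ν) g := by
    intro ν
    rw [coeff_qq, DD_toMultiset]
    have hz : ztMs ν.parts ≠ 0 := ztMs_ne _ (fun x hx => ν.parts_pos hx)
    field_simp
  rw [Finset.sum_congr rfl (fun ν _ => hterm ν)]
  rw [← Finset.sum_image (f := fun d => MvPolynomial.coeff d g)
    (g := DD) (fun ν _ σ _ h => DD_inj h)]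
  rw [← Finset.sum_subset hg
    (fun d _ hd => MvPolynomial.notMem_support_iff.mp hd)]
  rw [MvPolynomial.eval_eq]
  exact Finset.sum_congr rfl fun d _ => by simp

/-! ### Evaluations -/

lemma eval_qq (k : ℕ) (hk : 1 ≤ k) :
    MvPolynomial.eval (fun _ : ℕ+ => (1 : FF)) (qq (k : ℤ)) = 1 - tF := by
  rw [qq_eq, map_sum]
  have h : ∀ ν : Nat.Partition k,
      MvPolynomial.eval (fun _ : ℕ+ => (1 : FF))
        ((ztMs ν.parts)⁻¹ • MvPolynomial.monomial (DD ν) 1)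
      = (ztMs ν.parts)⁻¹ := by
    intro ν
    rw [MvPolynomial.smul_eq_C_mul, map_mul, MvPolynomial.eval_C,
      MvPolynomial.eval_monomial]
    simp [Finsupp.prod]
  rw [Finset.sum_congr rfl (fun ν _ => h ν)]
  exact SS_eq k hk

lemma eval_qProd (m : Multiset ℕ) (hpos : ∀ x ∈ m, 0 < x) :
    MvPolynomial.eval (fun _ : ℕ+ => (1 : FF)) (qProd m) = (1 - tF) ^ (Multiset.card m) := by
  induction m using Multiset.induction_on with
  | empty => rw [qProd_zero]; simp
  | cons a s ih =>
    rw [qProd_cons, map_mul, eval_qq a (hpos a (Multiset.mem_cons_self a s)),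
      ih (fun x hx => hpos x (Multiset.mem_cons_of_mem hx)), Multiset.card_cons, pow_succ]
    ring

/-! ### The one-row Hall–Littlewood function -/

instance pairsLT_one_empty : IsEmpty (PairsLT 1) :=
  ⟨fun pr => absurd pr.2 (by
    rw [Subsingleton.elim pr.1.1 pr.1.2]
    exact lt_irrefl _)⟩

lemma QTup_one (α : Fin 1 → ℤ) : QTup α = qq (α 0) := by
  rw [QTup, finsum_unique]
  show (∏ pr : PairsLT 1, cRO ((default : PairsLT 1 → ℕ) pr)) •
    qTup (raised α (default : PairsLT 1 → ℕ)) = qq (α 0)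
  have h1 : (∏ pr : PairsLT 1, cRO ((default : PairsLT 1 → ℕ) pr)) = 1 := by
    rw [Finset.univ_eq_empty, Finset.prod_empty]
  have h2 : raised α default = α := by
    funext r
    rw [raised, Finset.univ_eq_empty, Finset.sum_empty, add_zero]
  rw [h1, h2, one_smul, qTup, Fin.prod_univ_one]

lemma QMs_single (n : ℕ) : QMs {n} = qq (n : ℤ) := by
  have hsort : sortDesc {n} = [n] := by
    rw [sortDesc, Multiset.sort_singleton]
    rfl
  rw [QMs, hsort]
  show QL [(n : ℤ)] = qq (n : ℤ)
  rw [QL, QTup_one]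
  rfl

/-- For every partition `μ ⊢ n`, `n ≥ 1`: `B^{(n)}_μ(t) = (1-t)^{l(μ)}`. -/
theorem statement18 (n : ℕ) (hn : 1 ≤ n) (μ : List ℕ)
    (hmsort : μ.Pairwise (· ≥ ·)) (hmpos : ∀ x ∈ μ, 0 < x) (hmsum : μ.sum = n) :
    Btr ({n} : Multiset ℕ) (↑μ) = (1 - tF) ^ μ.length := by
  classical
  have hpos : ∀ x ∈ (↑μ : Multiset ℕ), 0 < x := by
    intro x hx
    exact hmpos x (Multiset.mem_coe.mp hx)
  have hsum : (↑μ : Multiset ℕ).sum = n := by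
    rw [Multiset.sum_coe]; exact hmsum
  have hsupp : (qProd ↑μ).support ⊆ Finset.univ.image (DD (n := n)) := by
    intro d hd
    have hw : Wt d = n := by
      have h1 := homo_qProd (↑μ) d hd
      rw [h1, hsum]
    refine Finset.mem_image.mpr ⟨⟨d.toMultiset.map (fun i : ℕ+ => (i : ℕ)), ?_, ?_⟩,
      Finset.mem_univ _, ?_⟩
    · intro i hi
      obtain ⟨j, -, rfl⟩ := Multiset.mem_map.mp hi
      exact j.pos
    · exact hw
    · show Multiset.toFinsupp (pnat (d.toMultiset.map (fun i : ℕ+ => (i : ℕ)))) = d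
      rw [pnat_map_val, Finsupp.toMultiset_toFinsupp]
  rw [Btr, QMs_single n, formHL_qq n _ hsupp, eval_qProd _ hpos, Multiset.coe_card]

end
end Green
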